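/- Let t ≥ 1 and suppose n + t is even with (n+t)/2 - 1 ≥ 0. Let F be the family of all subsets of [n] of size at least (n+t)/2 - 1. Then F is union-t-intersecting and |F| = Σ_{i=(n+t)/2 - 1}^{n} C(n, i). -/

import Mathlib

/-- Let `t ≥ 1` and suppose `n + t` is even (so `(n+t)/2 - 1 ≥ 0`).
Let `F` be the family of all subsets of `[n]` of size at least `(n+t)/2 - 1`.
Then `F` is union-`t`-intersecting and `|F| = Σ_{i=(n+t)/2-1}^{n} C(n,i)`. -/
theorem union_t_intersecting_construction_even (n t : ℕ) (ht : 1 ≤ t)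
    (heven : Even (n + t)) (F : Finset (Finset ℕ))
    (hF : F = (Finset.Icc 1 n).powerset.filter
      (fun A => (n + t) / 2 - 1 ≤ A.card)) :
    (∀ F₁ ∈ F, ∀ F₂ ∈ F, ∀ G₁ ∈ F, ∀ G₂ ∈ F, F₁ ≠ F₂ → G₁ ≠ G₂ →
      t ≤ ((F₁ ∪ F₂) ∩ (G₁ ∪ G₂)).card) ∧
    F.card = ∑ i ∈ Finset.Icc ((n + t) / 2 - 1) n, n.choose i := by
  subst hF
  obtain ⟨m, hm⟩ := heven
  have hm1 : 1 ≤ m := by omega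
  have hdiv : (n + t) / 2 = m := by omega
  have hIcc : (Finset.Icc 1 n).card = n := by simp
  constructor
  · intro F₁ h1 F₂ h2 G₁ h3 G₂ h4 hne hne'
    simp only [Finset.mem_filter, Finset.mem_powerset, hdiv] at h1 h2 h3 h4
    -- union of two distinct sets of size ≥ m-1 has size ≥ m
    have key : ∀ A B : Finset ℕ, A ⊆ Finset.Icc 1 n → B ⊆ Finset.Icc 1 n →
        m - 1 ≤ A.card → m - 1 ≤ B.card → A ≠ B → m ≤ (A ∪ B).card := by
      intro A B hA hB hcA hcB hAB
      by_contra h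
      push_neg at h
      have hAs : A ⊆ A ∪ B := Finset.subset_union_left
      have hBs : B ⊆ A ∪ B := Finset.subset_union_right
      have hcAu : A.card ≤ (A ∪ B).card := Finset.card_le_card hAs
      have hcBu : B.card ≤ (A ∪ B).card := Finset.card_le_card hBs
      have hA' : A = A ∪ B := Finset.eq_of_subset_of_card_le hAs (by omega)
      have hB' : B = A ∪ B := Finset.eq_of_subset_of_card_le hBs (by omega)
      exact hAB (hA'.trans hB'.symm)
    have hU : m ≤ (F₁ ∪ F₂).card := key _ _ h1.1 h2.1 h1.2 h2.2 hne
    have hV : m ≤ (G₁ ∪ G₂).card := key _ _ h3.1 h4.1 h3.2 h4.2 hne'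
    have hsub : (F₁ ∪ F₂) ∪ (G₁ ∪ G₂) ⊆ Finset.Icc 1 n :=
      Finset.union_subset (Finset.union_subset h1.1 h2.1) (Finset.union_subset h3.1 h4.1)
    have hle : ((F₁ ∪ F₂) ∪ (G₁ ∪ G₂)).card ≤ n := hIcc ▸ Finset.card_le_card hsub
    have heq := Finset.card_union_add_card_inter (F₁ ∪ F₂) (G₁ ∪ G₂)
    omega
  · have hset : (Finset.Icc 1 n).powerset.filter (fun A => (n + t) / 2 - 1 ≤ A.card)
        = (Finset.Icc ((n + t) / 2 - 1) n).biUnion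
            (fun i => (Finset.Icc 1 n).powersetCard i) := by
      ext A
      simp only [Finset.mem_filter, Finset.mem_powerset, Finset.mem_biUnion,
        Finset.mem_powersetCard, Finset.mem_Icc]
      constructor
      · rintro ⟨hA, hc⟩
        exact ⟨A.card, ⟨hc, hIcc ▸ Finset.card_le_card hA⟩, hA, rfl⟩
      · rintro ⟨i, ⟨hi1, _⟩, hA, rfl⟩
        exact ⟨hA, hi1⟩
    rw [hset, Finset.card_biUnion]
    · exact Finset.sum_congr rfl fun i _ => by
        rw [Finset.card_powersetCard, hIcc]
    · intro i hi j hj hij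
      simp only [Function.onFun]
      rw [Finset.disjoint_left]
      intro A hA hA'
      rw [Finset.mem_powersetCard] at hA hA'
      exact hij (hA.2 ▸ hA'.2)
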